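/- Let (Ω, 𝓕) be a measurable space and let Π be a nonempty set of Markov (probability) kernels from (Ω, 𝓕) to itself. Let 𝒫_Π be the set of all probability measures μ on (Ω, 𝓕) such that μπ = μ for every π ∈ Π (i.e. the measure obtained by integrating the kernel π against μ equals μ). For μ ∈ 𝒫_Π, let 𝓘_Π(μ) be the collection of measurable sets A such that for every π ∈ Π, the function ω ↦ π(ω, A) equals the indicator function of A for μ-almost every ω. Then μ is an extreme point of the convex set 𝒫_Π (i.e. whenever μ = t·μ₁ + (1−t)·μ₂ with μ₁, μ₂ ∈ 𝒫_Π and 0 < t < 1, one has μ₁ = μ₂ = μ) if and only if μ is trivial on 𝓘_Π(μ), i.e. μ(A) ∈ {0, 1} for every A ∈ 𝓘_Π(μ). -/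

import Mathlib

open MeasureTheory ProbabilityTheory Set
open scoped ENNReal

/-- If `π ω A` is a.e. the indicator of `A`, the conditional measure on `A` is invariant. -/
lemma cond_invariant_aux {Ω : Type*} [MeasurableSpace Ω]
    (π : Kernel Ω Ω) [IsMarkovKernel π]
    (μ : Measure Ω) (hinv : μ.bind (fun ω => π ω) = μ)
    {A : Set Ω} (hA : MeasurableSet A)
    (hind : ∀ᵐ ω ∂μ, π ω A = A.indicator (fun _ => (1 : ℝ≥0∞)) ω) :
    ((μ A)⁻¹ • μ.restrict A).bind (fun ω => π ω) = (μ A)⁻¹ • μ.restrict A := by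
  have hπm : Measurable (fun ω => (π ω : Measure Ω)) := π.measurable
  ext B hB
  rw [Measure.bind_apply hB hπm.aemeasurable, Measure.smul_apply, smul_eq_mul,
    lintegral_smul_measure, Measure.restrict_apply hB]
  congr 1
  have key : ∫⁻ ω in A, π ω B ∂μ = μ (B ∩ A) := by
    have h1 : (fun ω => A.indicator (fun ω => π ω B) ω) =ᵐ[μ]
        (fun ω => π ω (B ∩ A)) := by
      filter_upwards [hind] with ω hω
      by_cases hωA : ω ∈ A
      · have h2 : π ω A = 1 := by simpa [indicator_of_mem hωA] using hω
        have h3 : π ω Aᶜ = 0 := by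
          rw [measure_compl hA (measure_ne_top _ _), h2, measure_univ, tsub_self]
        have h4 : π ω (B \ A) = 0 :=
          measure_mono_null (diff_subset_compl B A) h3
        have h5 : π ω (B ∩ A) + π ω (B \ A) = π ω B := measure_inter_add_diff B hA
        simp [indicator_of_mem hωA, ← h5, h4]
      · have h2 : π ω A = 0 := by simpa [indicator_of_notMem hωA] using hω
        have h3 : π ω (B ∩ A) = 0 :=
          measure_mono_null (inter_subset_right) h2
        simp [indicator_of_notMem hωA, h3]
    calc ∫⁻ ω in A, π ω B ∂μ
        = ∫⁻ ω, A.indicator (fun ω => π ω B) ω ∂μ := by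
          rw [lintegral_indicator hA _]
      _ = ∫⁻ ω, π ω (B ∩ A) ∂μ := lintegral_congr_ae h1
      _ = (μ.bind (fun ω => π ω)) (B ∩ A) :=
          (Measure.bind_apply (hB.inter hA) hπm.aemeasurable).symm
      _ = μ (B ∩ A) := by rw [hinv]
  exact key

lemma ae_eq_one_aux {Ω : Type*} [MeasurableSpace Ω] (μ : Measure Ω)
    [IsProbabilityMeasure μ] {f : Ω → ℝ≥0∞} (hf : Measurable f)
    (hle : ∀ᵐ ω ∂μ, f ω ≤ 1) (hint : ∫⁻ ω, f ω ∂μ = 1) :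
    ∀ᵐ ω ∂μ, f ω = 1 := by
  have hzero : ∫⁻ ω, (1 - f ω) ∂μ = 0 := by
    rw [lintegral_sub hf (by simp [hint]) hle]
    simp [hint]
  have h := (lintegral_eq_zero_iff (measurable_const.sub hf)).mp hzero
  filter_upwards [h, hle] with ω h1 h2
  exact le_antisymm h2 (tsub_eq_zero_iff_le.mp h1)

lemma component_eq_aux {Ω : Type*} [MeasurableSpace Ω]
    (𝒦 : Set (Kernel Ω Ω)) (hmarkov : ∀ π ∈ 𝒦, IsMarkovKernel π)
    (μ : Measure Ω) (hprob : IsProbabilityMeasure μ)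
    (hinv : ∀ π ∈ 𝒦, μ.bind (fun ω => π ω) = μ)
    (htriv : ∀ A : Set Ω, MeasurableSet A →
      (∀ π ∈ 𝒦, ∀ᵐ ω ∂μ, π ω A = A.indicator (fun _ => (1 : ℝ≥0∞)) ω) →
      μ A = 0 ∨ μ A = 1)
    (μ₁ μ₂ : Measure Ω) (hprob₁ : IsProbabilityMeasure μ₁)
    (hinv₁ : ∀ π ∈ 𝒦, μ₁.bind (fun ω => π ω) = μ₁)
    (t : ℝ≥0∞) (ht0 : 0 < t)
    (hsum : μ = t • μ₁ + (1 - t) • μ₂) : μ₁ = μ := by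
  -- absolute continuity
  have habs : μ₁ ≪ μ := by
    refine Measure.AbsolutelyContinuous.mk fun s hs h0 => ?_
    have : (t • μ₁ + (1 - t) • μ₂) s = 0 := by rw [← hsum]; exact h0
    simp only [Measure.add_apply, Measure.smul_apply, smul_eq_mul, add_eq_zero] at this
    rcases mul_eq_zero.mp this.1 with h | h
    · exact absurd h ht0.ne'
    · exact h
  set f : Ω → ℝ≥0∞ := μ₁.rnDeriv μ with hfdef
  have hf : Measurable f := Measure.measurable_rnDeriv μ₁ μ
  have hwd : μ.withDensity f = μ₁ := Measure.withDensity_rnDeriv_eq μ₁ μ habs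
  have hint : ∫⁻ ω, f ω ∂μ = 1 := by
    rw [Measure.lintegral_rnDeriv habs, measure_univ]
  set A : Set Ω := {ω | 1 < f ω} with hAdef
  have hA : MeasurableSet A := measurableSet_lt measurable_const hf
  -- A is an invariant set
  have key : ∀ π ∈ 𝒦, ∀ᵐ ω ∂μ, π ω A = A.indicator (fun _ => (1 : ℝ≥0∞)) ω := by
    intro π hπ
    haveI := hmarkov π hπ
    set h : Ω → ℝ≥0∞ := fun ω => π ω A with hhdef
    have hh : Measurable h := π.measurable_coe hA
    have hh1 : ∀ ω, h ω ≤ 1 := fun ω => prob_le_one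
    have I2 : ∫⁻ ω, h ω ∂μ = μ A := by
      have := Measure.bind_apply (m := μ) hA π.measurable.aemeasurable
      rw [hinv π hπ] at this
      exact this.symm
    have I1 : ∫⁻ ω, h ω * f ω ∂μ = ∫⁻ ω in A, f ω ∂μ := by
      have e1 : (μ₁.bind (fun ω => π ω)) A = μ₁ A := by rw [hinv₁ π hπ]
      rw [Measure.bind_apply hA π.measurable.aemeasurable, ← hwd,
        lintegral_withDensity_eq_lintegral_mul μ hf hh, withDensity_apply f hA] at e1
      calc ∫⁻ ω, h ω * f ω ∂μ = ∫⁻ ω, (f * h) ω ∂μ := by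
            simp only [Pi.mul_apply, mul_comm]
        _ = ∫⁻ ω in A, f ω ∂μ := e1
    set e : Ω → ℝ≥0∞ := fun ω => f ω - 1 with hedef
    have he : Measurable e := hf.sub measurable_const
    -- finiteness facts
    have hfA_ne : ∫⁻ ω in A, f ω ∂μ ≠ ∞ := by
      refine ne_top_of_le_ne_top ?_ (setLIntegral_le_lintegral _ _)
      simp [hint]
    have hah_ne : ∫⁻ ω in A, h ω ∂μ ≠ ∞ := by
      refine ne_top_of_le_ne_top (measure_ne_top μ A) ?_
      calc ∫⁻ ω in A, h ω ∂μ ≤ ∫⁻ _ in A, 1 ∂μ := lintegral_mono fun ω => hh1 ω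
        _ = μ A := by simp
    have hdh_ne : ∫⁻ ω in Aᶜ, h ω ∂μ ≠ ∞ := by
      refine ne_top_of_le_ne_top (measure_ne_top μ Aᶜ) ?_
      calc ∫⁻ ω in Aᶜ, h ω ∂μ ≤ ∫⁻ _ in Aᶜ, 1 ∂μ := lintegral_mono fun ω => hh1 ω
        _ = μ Aᶜ := by simp
    have hhe_le : ∫⁻ ω in A, h ω * e ω ∂μ ≤ ∫⁻ ω in A, f ω ∂μ := by
      refine lintegral_mono fun ω => ?_
      calc h ω * e ω ≤ 1 * e ω := mul_le_mul_left (hh1 ω) _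
        _ = e ω := one_mul _
        _ ≤ f ω := tsub_le_self
    have hhe_ne : ∫⁻ ω in A, h ω * e ω ∂μ ≠ ∞ := ne_top_of_le_ne_top hfA_ne hhe_le
    -- splitting identities
    have E2 : ∫⁻ ω in A, h ω ∂μ + ∫⁻ ω in Aᶜ, h ω ∂μ = μ A := by
      rw [lintegral_add_compl h hA]; exact I2
    have E3 : ∫⁻ ω in A, h ω ∂μ + ∫⁻ ω in A, (1 - h ω) ∂μ = μ A := by
      rw [← lintegral_add_left hh]
      have : ∀ ω, h ω + (1 - h ω) = 1 := fun ω => add_tsub_cancel_of_le (hh1 ω)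
      simp only [this]
      simp
    have δeq : ∫⁻ ω in A, (1 - h ω) ∂μ = ∫⁻ ω in Aᶜ, h ω ∂μ :=
      (ENNReal.add_right_inj hah_ne).mp (E3.trans E2.symm)
    have E1 : ∫⁻ ω in A, h ω * f ω ∂μ + ∫⁻ ω in Aᶜ, h ω * f ω ∂μ = ∫⁻ ω in A, f ω ∂μ := by
      rw [lintegral_add_compl (fun ω => h ω * f ω) hA]; exact I1
    have EA1 : ∫⁻ ω in A, h ω * f ω ∂μ
        = ∫⁻ ω in A, h ω ∂μ + ∫⁻ ω in A, h ω * e ω ∂μ := by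
      rw [← lintegral_add_left hh]
      refine setLIntegral_congr_fun_ae hA (ae_of_all _ fun ω hω => ?_)
      have hω1 : (1 : ℝ≥0∞) ≤ f ω := le_of_lt hω
      calc h ω * f ω = h ω * (1 + e ω) := by rw [add_tsub_cancel_of_le hω1]
        _ = h ω + h ω * e ω := by rw [mul_add, mul_one]
    have EAf : ∫⁻ ω in A, f ω ∂μ = μ A + ∫⁻ ω in A, e ω ∂μ := by
      have : ∫⁻ ω in A, f ω ∂μ = ∫⁻ ω in A, (1 + e ω) ∂μ := by
        refine setLIntegral_congr_fun_ae hA (ae_of_all _ fun ω hω => ?_)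
        exact (add_tsub_cancel_of_le (le_of_lt hω)).symm
      rw [this, lintegral_add_left measurable_const]
      simp
    have EAe : ∫⁻ ω in A, e ω ∂μ
        = ∫⁻ ω in A, h ω * e ω ∂μ + ∫⁻ ω in A, (1 - h ω) * e ω ∂μ := by
      rw [← lintegral_add_left (f := fun ω => h ω * e ω) (hh.mul he)]
      refine lintegral_congr fun ω => ?_
      calc e ω = (h ω + (1 - h ω)) * e ω := by
            rw [add_tsub_cancel_of_le (hh1 ω), one_mul]
        _ = h ω * e ω + (1 - h ω) * e ω := add_mul _ _ _
    -- master cancellation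
    have Ekey : ∫⁻ ω in Aᶜ, h ω * f ω ∂μ
        = ∫⁻ ω in Aᶜ, h ω ∂μ + ∫⁻ ω in A, (1 - h ω) * e ω ∂μ := by
      set a := ∫⁻ ω in A, h ω ∂μ
      set b := ∫⁻ ω in A, h ω * e ω ∂μ
      set c := ∫⁻ ω in Aᶜ, h ω * f ω ∂μ
      set d := ∫⁻ ω in Aᶜ, h ω ∂μ
      set g := ∫⁻ ω in A, (1 - h ω) * e ω ∂μ
      have H1 : a + b + c = (a + d) + (b + g) := by
        rw [← EA1]
        rw [E1, EAf, ← E2, EAe]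
      have H2 : (a + d) + (b + g) = a + b + (d + g) := by ring
      have H3 : a + b + c = a + b + (d + g) := H1.trans H2
      exact (ENNReal.add_right_inj (ENNReal.add_ne_top.mpr ⟨hah_ne, hhe_ne⟩)).mp H3
    have hb : ∫⁻ ω in Aᶜ, h ω * f ω ∂μ ≤ ∫⁻ ω in Aᶜ, h ω ∂μ := by
      refine lintegral_mono_ae ((ae_restrict_iff' hA.compl).mpr (ae_of_all _ fun ω hω => ?_))
      have : f ω ≤ 1 := not_lt.mp hω
      calc h ω * f ω ≤ h ω * 1 := mul_le_mul_right this _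
        _ = h ω := mul_one _
    have hg0 : ∫⁻ ω in A, (1 - h ω) * e ω ∂μ = 0 := by
      have hle2 : ∫⁻ ω in Aᶜ, h ω ∂μ + ∫⁻ ω in A, (1 - h ω) * e ω ∂μ
          ≤ ∫⁻ ω in Aᶜ, h ω ∂μ + 0 := by
        rw [add_zero, ← Ekey]
        exact hb
      exact le_antisymm ((ENNReal.add_le_add_iff_left hdh_ne).mp hle2) zero_le
    -- h = 1 a.e. on A
    have hA1 : ∀ᵐ ω ∂μ, ω ∈ A → h ω = 1 := by
      have := (lintegral_eq_zero_iff ((measurable_const.sub hh).mul he)).mp hg0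
      rw [Filter.EventuallyEq, ae_restrict_iff' hA] at this
      filter_upwards [this] with ω hω hωA
      have hne : e ω ≠ 0 := by
        intro h0
        exact absurd (tsub_eq_zero_iff_le.mp h0) (not_le.mpr hωA)
      rcases mul_eq_zero.mp (hω hωA) with h0 | h0
      · exact le_antisymm (hh1 ω) (tsub_eq_zero_iff_le.mp h0)
      · exact absurd h0 hne
    -- h = 0 a.e. on Aᶜ
    have hδ0 : ∫⁻ ω in A, (1 - h ω) ∂μ = 0 := by
      have : (fun ω => 1 - h ω) =ᵐ[μ.restrict A] 0 := by
        rw [Filter.EventuallyEq, ae_restrict_iff' hA]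
        filter_upwards [hA1] with ω hω hωA
        simp [hω hωA]
      rw [lintegral_congr_ae this]
      simp
    have hA0 : ∀ᵐ ω ∂μ, ω ∈ Aᶜ → h ω = 0 := by
      have h0 : ∫⁻ ω in Aᶜ, h ω ∂μ = 0 := by rw [← δeq]; exact hδ0
      have := (lintegral_eq_zero_iff hh).mp h0
      rw [Filter.EventuallyEq, ae_restrict_iff' hA.compl] at this
      filter_upwards [this] with ω hω hωA
      exact hω hωA
    filter_upwards [hA1, hA0] with ω h1 h0
    by_cases hωA : ω ∈ A
    · rw [indicator_of_mem hωA]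
      exact h1 hωA
    · rw [indicator_of_notMem hωA]
      exact h0 hωA
  -- triviality
  rcases htriv A hA key with h0 | h1
  · -- μ A = 0 : f ≤ 1 a.e., so f = 1 a.e., so μ₁ = μ
    have hle : ∀ᵐ ω ∂μ, f ω ≤ 1 := by
      rw [ae_iff]
      simpa [hAdef, not_le] using h0
    have feq := ae_eq_one_aux μ hf hle hint
    rw [← hwd]
    calc μ.withDensity f = μ.withDensity 1 := withDensity_congr_ae feq
      _ = μ := withDensity_one
  · -- μ A = 1 : f > 1 a.e., contradiction
    exfalso
    have hgt : ∀ᵐ ω ∂μ, 1 < f ω := by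
      rw [ae_iff]
      have : {ω | ¬ 1 < f ω} = Aᶜ := by ext ω; simp [hAdef]
      rw [this, prob_compl_eq_one_sub hA, h1, tsub_self]
    have hzero : ∫⁻ ω, (f ω - 1) ∂μ = 0 := by
      rw [lintegral_sub measurable_const (by simp) (hgt.mono fun ω hω => hω.le)]
      simp [hint]
    have hle' := (lintegral_eq_zero_iff (hf.sub measurable_const)).mp hzero
    haveI : (MeasureTheory.ae μ).NeBot := ae_neBot.mpr (IsProbabilityMeasure.ne_zero μ)
    obtain ⟨ω, hω1, hω2⟩ := (hgt.and hle').exists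
    exact absurd (tsub_eq_zero_iff_le.mp hω2) (not_le.mpr hω1)

/-- Lemma 4.2 of the paper (Corollary 7.4 in Georgii): a probability measure
invariant under a nonempty family of Markov kernels is an extreme point of the
convex set of invariant probability measures if and only if it is trivial on the
σ-algebra of sets whose kernel-hitting function is a.s. the indicator function. -/
theorem extreme_iff_trivial_on_invariant_sets
    {Ω : Type*} [MeasurableSpace Ω]
    (𝒦 : Set (Kernel Ω Ω)) (hne : 𝒦.Nonempty)
    (hmarkov : ∀ π ∈ 𝒦, IsMarkovKernel π)
    (P : Set (Measure Ω))
    (hP : P = {ν : Measure Ω | IsProbabilityMeasure ν ∧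
      ∀ π ∈ 𝒦, ν.bind (fun ω => π ω) = ν})
    (μ : Measure Ω) (hμ : μ ∈ P) :
    (∀ μ₁ ∈ P, ∀ μ₂ ∈ P, ∀ t : ℝ≥0∞, 0 < t → t < 1 →
        μ = t • μ₁ + (1 - t) • μ₂ → μ₁ = μ ∧ μ₂ = μ) ↔
      (∀ A : Set Ω, MeasurableSet A →
        (∀ π ∈ 𝒦, ∀ᵐ ω ∂μ, π ω A = A.indicator (fun _ => (1 : ℝ≥0∞)) ω) →
        μ A = 0 ∨ μ A = 1) := by
  subst hP
  obtain ⟨hprob, hinv⟩ := hμ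
  haveI := hprob
  constructor
  · -- extreme → trivial
    intro hext A hA hind
    by_contra hcon
    push_neg at hcon
    obtain ⟨ha0, ha1⟩ := hcon
    have haT : μ A ≠ ∞ := measure_ne_top μ A
    have hcompl : μ Aᶜ = 1 - μ A := prob_compl_eq_one_sub hA
    have hac0 : μ Aᶜ ≠ 0 := by
      rw [hcompl]
      intro h
      exact ha1 (le_antisymm prob_le_one (tsub_eq_zero_iff_le.mp h))
    have hacT : μ Aᶜ ≠ ∞ := measure_ne_top μ Aᶜ
    -- the complement indicator property
    have hind' : ∀ π ∈ 𝒦, ∀ᵐ ω ∂μ, π ω Aᶜ = Aᶜ.indicator (fun _ => (1 : ℝ≥0∞)) ω := by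
      intro π hπ
      haveI := hmarkov π hπ
      filter_upwards [hind π hπ] with ω hω
      have hc : π ω Aᶜ = 1 - π ω A := by
        rw [measure_compl hA (measure_ne_top _ _), measure_univ]
      by_cases hωA : ω ∈ A
      · rw [hc, hω, indicator_of_mem hωA, indicator_of_notMem (by simpa using hωA),
          tsub_self]
      · rw [hc, hω, indicator_of_notMem hωA, indicator_of_mem (by simpa using hωA),
          tsub_zero]
    set μ₁ : Measure Ω := (μ A)⁻¹ • μ.restrict A with hμ₁def
    set μ₂ : Measure Ω := (μ Aᶜ)⁻¹ • μ.restrict Aᶜ with hμ₂def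
    have hprob₁ : IsProbabilityMeasure μ₁ := by
      constructor
      rw [hμ₁def, Measure.smul_apply, Measure.restrict_apply_univ, smul_eq_mul]
      exact ENNReal.inv_mul_cancel ha0 haT
    have hprob₂ : IsProbabilityMeasure μ₂ := by
      constructor
      rw [hμ₂def, Measure.smul_apply, Measure.restrict_apply_univ, smul_eq_mul]
      exact ENNReal.inv_mul_cancel hac0 hacT
    have hinv₁ : ∀ π ∈ 𝒦, μ₁.bind (fun ω => π ω) = μ₁ := by
      intro π hπ
      haveI := hmarkov π hπ
      exact cond_invariant_aux π μ (hinv π hπ) hA (hind π hπ)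
    have hinv₂ : ∀ π ∈ 𝒦, μ₂.bind (fun ω => π ω) = μ₂ := by
      intro π hπ
      haveI := hmarkov π hπ
      exact cond_invariant_aux π μ (hinv π hπ) hA.compl (hind' π hπ)
    have hsum : μ = μ A • μ₁ + (1 - μ A) • μ₂ := by
      rw [hμ₁def, hμ₂def, ← hcompl, smul_smul, smul_smul,
        ENNReal.mul_inv_cancel ha0 haT, ENNReal.mul_inv_cancel hac0 hacT,
        one_smul, one_smul]
      ext B hB
      rw [Measure.add_apply, Measure.restrict_apply hB, Measure.restrict_apply hB,
        ← diff_eq, measure_inter_add_diff B hA]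
    obtain ⟨h1, _⟩ := hext μ₁ ⟨hprob₁, hinv₁⟩ μ₂ ⟨hprob₂, hinv₂⟩ (μ A)
      (pos_iff_ne_zero.mpr ha0) (lt_of_le_of_ne prob_le_one ha1) hsum
    apply hac0
    calc μ Aᶜ = μ₁ Aᶜ := by rw [h1]
      _ = (μ A)⁻¹ * μ (Aᶜ ∩ A) := by
          rw [hμ₁def, Measure.smul_apply, smul_eq_mul, Measure.restrict_apply hA.compl]
      _ = 0 := by rw [compl_inter_self, measure_empty, mul_zero]
  · -- trivial → extreme
    intro htriv μ₁ hμ₁ μ₂ hμ₂ t ht0 ht1 hsum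
    obtain ⟨hprob₁, hinv₁⟩ := hμ₁
    obtain ⟨hprob₂, hinv₂⟩ := hμ₂
    constructor
    · exact component_eq_aux 𝒦 hmarkov μ hprob hinv htriv μ₁ μ₂ hprob₁ hinv₁ t ht0 hsum
    · have ht0' : (0 : ℝ≥0∞) < 1 - t := tsub_pos_of_lt ht1
      have hsum' : μ = (1 - t) • μ₂ + (1 - (1 - t)) • μ₁ := by
        rw [ENNReal.sub_sub_cancel ENNReal.one_ne_top ht1.le, add_comm]
        exact hsum
      exact component_eq_aux 𝒦 hmarkov μ hprob hinv htriv μ₂ μ₁ hprob₂ hinv₂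
        (1 - t) ht0' hsum'
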